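/- Let (W, I) be a Coxeter group and let u, w ∈ W. The set {v w : v ≤ u} (Bruhat order) contains a unique maximal element y' with respect to Bruhat order; moreover ℓ(y') = ℓ(w) + ℓ(y' w⁻¹). -/

import Mathlib

set_option linter.unusedSectionVars false

open CoxeterSystem List

variable {B W : Type*} [Group W] {M : CoxeterMatrix B}

namespace BruhatAux

/-- Parity monoid: functions `W → ZMod 2` with a twisted product, times `W`. -/
def PG (W : Type*) := (W → ZMod 2) × W

instance (W : Type*) [Group W] : Monoid (PG W) where
  mul x y := ⟨fun t => x.1 t + y.1 (x.2⁻¹ * t * x.2), x.2 * y.2⟩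
  one := ⟨fun _ => 0, 1⟩
  mul_assoc x y z := by
    refine Prod.ext ?_ ?_
    · funext t
      show (x.1 t + y.1 (x.2⁻¹ * t * x.2)) + z.1 ((x.2 * y.2)⁻¹ * t * (x.2 * y.2))
        = x.1 t + (y.1 (x.2⁻¹ * t * x.2) + z.1 (y.2⁻¹ * (x.2⁻¹ * t * x.2) * y.2))
      simp [mul_assoc, mul_inv_rev, add_assoc]
    · show x.2 * y.2 * z.2 = x.2 * (y.2 * z.2)
      exact mul_assoc _ _ _
  one_mul x := by
    refine Prod.ext ?_ ?_
    · funext t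
      show 0 + x.1 ((1 : W)⁻¹ * t * 1) = x.1 t
      simp
    · show 1 * x.2 = x.2
      simp
  mul_one x := by
    refine Prod.ext ?_ ?_
    · funext t
      show x.1 t + 0 = x.1 t
      simp
    · show x.2 * 1 = x.2
      simp

theorem PG.mul_def {W : Type*} [Group W] (x y : PG W) :
    x * y = ⟨fun t => x.1 t + y.1 (x.2⁻¹ * t * x.2), x.2 * y.2⟩ := rfl

theorem PG.one_def (W : Type*) [Group W] : (1 : PG W) = ⟨fun _ => 0, 1⟩ := rfl

variable [DecidableEq W] (cs : CoxeterSystem M W)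

local prefix:100 "s" => cs.simple
local prefix:100 "π" => cs.wordProd
local prefix:100 "ℓ" => cs.length
local prefix:100 "lis" => cs.leftInvSeq
local prefix:100 "ris" => cs.rightInvSeq

/-- The letter map into the parity monoid. -/
def pletter (i : B) : PG W := ⟨fun t => if t = s i then 1 else 0, s i⟩

theorem leftInvSeq_cons (i : B) (ω : List B) :
    lis (i :: ω) = s i :: List.map (MulAut.conj (s i)) (lis ω) := rfl

theorem prod_pletter (ω : List B) :
    (ω.map (pletter cs)).prod = ⟨fun t => ((lis ω).count t : ZMod 2), π ω⟩ := by
  induction ω with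
  | nil => simp [PG.one_def]; rfl
  | cons i ω ih =>
    rw [List.map_cons, List.prod_cons, PG.mul_def, ih, pletter]
    refine Prod.ext ?_ ?_
    · funext t
      show (if t = s i then (1 : ZMod 2) else 0) + ((lis ω).count ((s i)⁻¹ * t * s i) : ZMod 2)
        = ((lis (i :: ω)).count t : ZMod 2)
      rw [leftInvSeq_cons, List.count_cons]
      have hinj : Function.Injective (⇑(MulAut.conj (s i))) := (MulAut.conj (s i)).injective
      have ht : t = (MulAut.conj (s i)) ((s i)⁻¹ * t * s i) := by
        simp [MulAut.conj_apply, cs.inv_simple, mul_assoc, cs.simple_mul_simple_cancel_left]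
      have hc : (List.map (⇑(MulAut.conj (s i))) (lis ω)).count t
          = (lis ω).count ((s i)⁻¹ * t * s i) := by
        rw [ht, List.count_map_of_injective _ _ hinj, ← ht]
      rw [hc]
      rcases eq_or_ne t (s i) with h | h
      · subst h; push_cast; simp [add_comm]
      · push_cast; simp [h, Ne.symm h]
    · show s i * π ω = π (i :: ω)
      rw [cs.wordProd_cons]


theorem swap_pow (a b : W) (k : ℕ) : a * (b * a) ^ k = (a * b) ^ k * a := by
  induction k with
  | zero => simp
  | succ k ih =>
    calc a * (b * a) ^ (k+1) = a * (b * a) ^ k * (b * a) := by rw [pow_succ, mul_assoc]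
      _ = (a * b) ^ k * a * (b * a) := by rw [ih]
      _ = (a * b) ^ k * (a * b) * a := by simp only [mul_assoc]
      _ = (a * b) ^ (k+1) * a := by rw [pow_succ]

theorem alt_two_mul_succ (i i' : B) (m : ℕ) :
    alternatingWord i i' (2 * (m + 1)) = i :: i' :: alternatingWord i i' (2 * m) := by
  have h2 : 2 * (m + 1) = (2 * m) + 1 + 1 := by ring
  have he : Even (2 * m) := even_two_mul m
  rw [h2, alternatingWord_succ', alternatingWord_succ']
  simp [Nat.even_add_one, he]

theorem lis_alt (i i' : B) (n : ℕ) : ∀ k, k < n →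
    (lis (alternatingWord i i' n)).getD k 1
      = if Even n then s i * (s i' * s i) ^ k else s i' * (s i * s i') ^ k := by
  induction n with
  | zero => omega
  | succ n ih =>
    intro k hk
    rw [alternatingWord_succ', leftInvSeq_cons]
    match k with
    | 0 =>
      rw [List.getD_cons_zero]
      by_cases h : Even n
      · simp [h, Nat.even_add_one]
      · simp [h, Nat.even_add_one]
    | (k + 1) =>
      rw [List.getD_cons_succ]
      have hk' : k < n := by omega
      have hlen : k < (List.map (⇑(MulAut.conj (s (if Even n then i' else i))))
          (lis (alternatingWord i i' n))).length := by
        simp [cs.length_leftInvSeq, length_alternatingWord]; omega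
      have hlen2 : k < (lis (alternatingWord i i' n)).length := by
        simp [cs.length_leftInvSeq, length_alternatingWord]; omega
      rw [List.getD_eq_getElem _ _ hlen, List.getElem_map, ← List.getD_eq_getElem _ 1 hlen2,
        ih k hk']
      by_cases h : Even n
      · have h1 : ¬ Even (n + 1) := by simp [Nat.even_add_one, h]
        simp only [h, if_true, h1, if_false, MulAut.conj_apply, cs.inv_simple]
        rw [swap_pow (cs.simple i) (cs.simple i') k, pow_succ]
        simp only [mul_assoc]
      · have h1 : Even (n + 1) := by simpa [Nat.even_add_one] using h
        simp only [h, if_false, h1, if_true, MulAut.conj_apply, cs.inv_simple]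
        rw [swap_pow (cs.simple i') (cs.simple i) k, pow_succ]
        simp only [mul_assoc]


theorem lis_alt_drop_eq_take (i i' : B) :
    (lis (alternatingWord i i' (2 * M i i'))).drop (M i i')
      = (lis (alternatingWord i i' (2 * M i i'))).take (M i i') := by
  set m := M i i' with hm
  have hlen : (lis (alternatingWord i i' (2 * m))).length = 2 * m := by
    rw [cs.length_leftInvSeq, length_alternatingWord]
  apply List.ext_getElem
  · simp [hlen]; omega
  · intro k h1 h2
    rw [List.getElem_drop, List.getElem_take]
    have e1 : m + k < (lis (alternatingWord i i' (2 * m))).length := by simp [hlen] at h1 ⊢; omega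
    have e2 : k < (lis (alternatingWord i i' (2 * m))).length := by simp [hlen] at h2 ⊢; omega
    rw [← List.getD_eq_getElem _ 1 e1, ← List.getD_eq_getElem _ 1 e2]
    have hk1 : m + k < 2 * m := by rw [← hlen]; exact e1
    have hk2 : k < 2 * m := by rw [← hlen]; exact e2
    rw [lis_alt cs i i' (2 * m) _ hk1, lis_alt cs i i' (2 * m) _ hk2]
    have he : Even (2 * m) := even_two_mul m
    simp only [he, if_true]
    rw [add_comm m k, pow_add, hm, cs.simple_mul_simple_pow', mul_one]

theorem pletter_liftable : M.IsLiftable (pletter cs) := by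
  intro i i'
  have hp : ∀ m : ℕ, (pletter cs i * pletter cs i') ^ m
      = ((alternatingWord i i' (2 * m)).map (pletter cs)).prod := by
    intro m
    induction m with
    | zero => simp [alternatingWord]
    | succ m ih =>
      rw [pow_succ', ih, alt_two_mul_succ, List.map_cons, List.map_cons, List.prod_cons,
        List.prod_cons, mul_assoc]
  rw [hp, prod_pletter, PG.one_def]
  refine Prod.ext ?_ ?_
  · funext t
    show (((lis (alternatingWord i i' (2 * M i i'))).count t : ℕ) : ZMod 2) = 0
    conv_lhs => rw [← List.take_append_drop (M i i') (lis (alternatingWord i i' (2 * M i i')))]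
    rw [List.count_append, lis_alt_drop_eq_take]
    push_cast
    ring_nf
    have h2 : (2 : ZMod 2) = 0 := rfl
    rw [h2, mul_zero]
  · show π (alternatingWord i i' (2 * M i i')) = 1
    rw [cs.prod_alternatingWord_eq_mul_pow]
    have he : Even (2 * M i i') := even_two_mul _
    have hd : 2 * M i i' / 2 = M i i' := by omega
    simp [he, hd, cs.simple_mul_simple_pow]

/-- The parity homomorphism. -/
def phi : W →* PG W := cs.lift ⟨pletter cs, pletter_liftable cs⟩

theorem phi_wordProd (ω : List B) :
    phi cs (π ω) = ⟨fun t => ((lis ω).count t : ZMod 2), π ω⟩ := by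
  rw [← prod_pletter]
  induction ω with
  | nil => simp [cs.wordProd_nil]
  | cons i ω ih =>
    rw [cs.wordProd_cons, map_mul, ih, List.map_cons, List.prod_cons]
    congr 1
    exact cs.lift_apply_simple (pletter_liftable cs) i

theorem count_lis_congr {ω κ : List B} (h : π ω = π κ) (t : W) :
    (((lis ω).count t : ℕ) : ZMod 2) = (((lis κ).count t : ℕ) : ZMod 2) := by
  have h1 := phi_wordProd cs ω
  have h2 := phi_wordProd cs κ
  rw [h] at h1
  exact congrFun (congrArg Prod.fst ((h1.symm.trans h2))) t

theorem lis_append (α β : List B) :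
    lis (α ++ β) = lis α ++ List.map (MulAut.conj (π α)) (lis β) := by
  induction α with
  | nil =>
    have h1 : ⇑(MulAut.conj (π ([] : List B))) = id := by
      funext x
      simp [MulAut.conj_apply, cs.wordProd_nil]
    simp [h1]
  | cons a α ih =>
    rw [List.cons_append, leftInvSeq_cons, leftInvSeq_cons, ih, List.map_append, List.map_map,
      cs.wordProd_cons]
    have h1 : (⇑(MulAut.conj (s a)) ∘ ⇑(MulAut.conj (π α))) = ⇑(MulAut.conj (s a * π α)) := by
      funext x
      simp [MulAut.conj_apply, mul_assoc, mul_inv_rev]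
    rw [h1, List.cons_append]

theorem rightInvSeq_cons' (i : B) (ω : List B) :
    ris (i :: ω) = ((π ω)⁻¹ * (s i) * (π ω)) :: ris ω := rfl

theorem ris_eq_map (ω : List B) : ris ω = List.map (MulAut.conj (π ω)⁻¹) (lis ω) := by
  induction ω with
  | nil => simp
  | cons i ω ih =>
    rw [rightInvSeq_cons', leftInvSeq_cons, List.map_cons, List.map_map, ih,
      cs.wordProd_cons, mul_inv_rev, cs.inv_simple]
    congr 1
    · simp [MulAut.conj_apply, mul_inv_rev, mul_assoc, cs.simple_mul_simple_cancel_left]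
    · congr 1
      funext x
      simp [MulAut.conj_apply, mul_assoc, cs.simple_mul_simple_cancel_left]


theorem mem_lis_of_lt {t w : W} (ht : cs.IsReflection t) (hlt : ℓ (t * w) < ℓ w)
    {ω : List B} (hred : cs.IsReduced ω) (hw : π ω = w) : t ∈ lis ω := by
  obtain ⟨x, i, hxi⟩ := ht
  have ht : cs.IsReflection t := ⟨x, i, hxi⟩
  obtain ⟨ξ, hξred, hξ⟩ := cs.exists_reduced_word' x
  obtain ⟨κ, hκred, hκ⟩ := cs.exists_reduced_word' (t * w)
  set p : W := π ξ with hp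
  set ρ : List B := ξ ++ i :: ξ.reverse with hρ
  have hπρ : π ρ = t := by
    rw [hρ, cs.wordProd_append, cs.wordProd_cons, cs.wordProd_reverse, ← hp, hxi, hξ, mul_assoc]
  have hπ : π (ρ ++ κ) = π ω := by
    rw [cs.wordProd_append, hπρ, ← hκ, hw, ← mul_assoc, ht.mul_self, one_mul]
  have hcongr := count_lis_congr cs hπ t
  -- compute count t (lis ρ)
  have hcomp : (⇑(MulAut.conj p) ∘ ⇑(MulAut.conj (s i))) = ⇑(MulAut.conj (p * s i)) := by
    funext y
    simp [MulAut.conj_apply, mul_assoc, mul_inv_rev]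
  have hlisρ : lis ρ = lis ξ ++ (t :: List.map (⇑(MulAut.conj (p * s i))) (lis ξ.reverse)) := by
    rw [hρ, lis_append, leftInvSeq_cons, List.map_cons, List.map_map, hcomp]
    congr 2
    rw [MulAut.conj_apply]
    rw [hxi, hξ]
  have e1 : t = (MulAut.conj (p * s i)) (s i) := by
    rw [MulAut.conj_apply, hxi, hξ]
    simp [mul_inv_rev, cs.inv_simple, mul_assoc, cs.simple_mul_simple_cancel_left]
  have e2 : s i = (MulAut.conj p⁻¹) t := by
    rw [MulAut.conj_apply, hxi, hξ]
    simp [mul_assoc]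
  have hcnt2 : (List.map (⇑(MulAut.conj (p * s i))) (lis ξ.reverse)).count t
      = (lis ξ).count t := by
    calc (List.map (⇑(MulAut.conj (p * s i))) (lis ξ.reverse)).count t
        = (List.map (⇑(MulAut.conj (p * s i))) (lis ξ.reverse)).count
            ((MulAut.conj (p * s i)) (s i)) := by rw [← e1]
      _ = (lis ξ.reverse).count (s i) :=
          List.count_map_of_injective _ _ (MulAut.conj (p * s i)).injective _
      _ = (ris ξ).count (s i) := by rw [cs.leftInvSeq_reverse, List.count_reverse]
      _ = (List.map (⇑(MulAut.conj (π ξ)⁻¹)) (lis ξ)).count ((MulAut.conj p⁻¹) t) := by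
          rw [ris_eq_map, ← e2]
      _ = (lis ξ).count t := by
          rw [← hp]
          exact List.count_map_of_injective _ _ (MulAut.conj p⁻¹).injective _
  have hκ0 : (lis κ).count t = 0 := by
    rw [List.count_eq_zero]
    intro hmem
    have h2 := (cs.isLeftInversion_of_mem_leftInvSeq hκred hmem).2
    rw [← hκ, ← mul_assoc, ht.mul_self, one_mul] at h2
    omega
  have hmapκ : (List.map (⇑(MulAut.conj (π ρ))) (lis κ)).count t = 0 := by
    rw [hπρ]
    calc (List.map (⇑(MulAut.conj t)) (lis κ)).count t
        = (List.map (⇑(MulAut.conj t)) (lis κ)).count ((MulAut.conj t) t) := by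
          congr 1
          rw [MulAut.conj_apply]
          group
      _ = (lis κ).count t := List.count_map_of_injective _ _ (MulAut.conj t).injective _
      _ = 0 := hκ0
  -- assemble
  rw [lis_append, List.count_append, hmapκ, hlisρ, List.count_append, List.count_cons_self,
    hcnt2] at hcongr
  by_contra hnm
  have h0 : (lis ω).count t = 0 := List.count_eq_zero.mpr hnm
  rw [h0] at hcongr
  push_cast at hcongr
  ring_nf at hcongr
  rw [show ((2 : ZMod 2)) = 0 from rfl] at hcongr
  simp at hcongr

theorem strong_exchange_left {t w : W} (ht : cs.IsReflection t) (hlt : ℓ (t * w) < ℓ w)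
    {ω : List B} (hred : cs.IsReduced ω) (hw : π ω = w) :
    ∃ k, k < ω.length ∧ t * w = π (ω.eraseIdx k) := by
  have hmem := mem_lis_of_lt cs ht hlt hred hw
  obtain ⟨k, hk, hkt⟩ := List.mem_iff_getElem.mp hmem
  refine ⟨k, by rw [← cs.length_leftInvSeq ω]; exact hk, ?_⟩
  rw [← hw, ← cs.getD_leftInvSeq_mul_wordProd ω k]
  congr 1
  rw [List.getD_eq_getElem _ _ hk, hkt]

theorem strong_exchange_right {t w : W} (ht : cs.IsReflection t) (hlt : ℓ (w * t) < ℓ w)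
    {ω : List B} (hred : cs.IsReduced ω) (hw : π ω = w) :
    ∃ k, k < ω.length ∧ w * t = π (ω.eraseIdx k) := by
  have h1 : ℓ (t * w⁻¹) < ℓ w⁻¹ := by
    have e : t * w⁻¹ = (w * t)⁻¹ := by rw [mul_inv_rev, ht.inv]
    rw [e, cs.length_inv, cs.length_inv]
    exact hlt
  have hmem := mem_lis_of_lt cs ht h1 (ω := ω.reverse)
    ((cs.isReduced_reverse_iff ω).mpr hred) (by rw [cs.wordProd_reverse, hw])
  rw [cs.leftInvSeq_reverse, List.mem_reverse] at hmem
  obtain ⟨k, hk, hkt⟩ := List.mem_iff_getElem.mp hmem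
  refine ⟨k, by rw [← cs.length_rightInvSeq ω]; exact hk, ?_⟩
  rw [← hw, ← cs.wordProd_mul_getD_rightInvSeq ω k]
  congr 1
  rw [List.getD_eq_getElem _ _ hk, hkt]


theorem exists_reduced_sublist_aux (n : ℕ) :
    ∀ ρ : List B, ρ.length ≤ n → ∃ σ, σ.Sublist ρ ∧ cs.IsReduced σ ∧ π σ = π ρ := by
  induction n with
  | zero =>
    intro ρ hρ
    have : ρ = [] := List.length_eq_zero_iff.mp (Nat.le_zero.mp hρ)
    subst this
    exact ⟨[], List.Sublist.refl _, by simp [CoxeterSystem.IsReduced, cs.wordProd_nil], rfl⟩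
  | succ n ihn =>
    intro ρ hρ
    classical
    by_cases hred : cs.IsReduced ρ
    · exact ⟨ρ, List.Sublist.refl _, hred, rfl⟩
    have hlenpos : 0 < ρ.length := by
      rcases Nat.eq_zero_or_pos ρ.length with h | h
      · exact absurd (by simp [CoxeterSystem.IsReduced, List.length_eq_zero_iff.mp h, cs.wordProd_nil]) hred
      · exact h
    have hK : ∃ j, ¬ cs.IsReduced (ρ.take (j + 1)) := by
      refine ⟨ρ.length - 1, ?_⟩
      have e : ρ.length - 1 + 1 = ρ.length := by omega
      rwa [e, List.take_length]
    set k := Nat.find hK with hkdef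
    have hk : ¬ cs.IsReduced (ρ.take (k + 1)) := Nat.find_spec hK
    have hkred : cs.IsReduced (ρ.take k) := by
      match hh : k with
      | 0 => simp [CoxeterSystem.IsReduced, cs.wordProd_nil]
      | (k' + 1) =>
        have := Nat.find_min hK (by omega : k' < k)
        exact not_not.mp this
    have hklt : k < ρ.length := by
      have : k ≤ ρ.length - 1 := Nat.find_le (by
        have e : ρ.length - 1 + 1 = ρ.length := by omega
        rwa [e, List.take_length])
      omega
    have hlen_take : (ρ.take k).length = k := by
      rw [List.length_take]
      omega
    have htake : ρ.take (k + 1) = ρ.take k ++ [ρ[k]] := by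
      rw [List.take_succ, List.getElem?_eq_getElem hklt]
      rfl
    have hxj : π (ρ.take (k + 1)) = π (ρ.take k) * s (ρ[k]) := by
      rw [htake, cs.wordProd_append, cs.wordProd_singleton]
    have hxlen : ℓ (π (ρ.take k)) = k := by
      have := hkred
      rwa [CoxeterSystem.IsReduced, hlen_take] at this
    have hlt : ℓ (π (ρ.take k) * s (ρ[k])) < ℓ (π (ρ.take k)) := by
      rcases cs.length_mul_simple (π (ρ.take k)) (ρ[k]) with h | h
      · exfalso
        apply hk
        rw [CoxeterSystem.IsReduced, hxj, h, hxlen, List.length_take]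
        omega
      · omega
    obtain ⟨m, hm, hme⟩ := strong_exchange_right cs (cs.isReflection_simple (ρ[k])) hlt hkred rfl
    set σ₀ := (ρ.take k).eraseIdx m ++ ρ.drop (k + 1) with hσ₀
    have hπσ₀ : π σ₀ = π ρ := by
      conv_rhs => rw [← List.take_append_drop (k + 1) ρ]
      rw [hσ₀, cs.wordProd_append, cs.wordProd_append, ← hme, ← hxj]
    have hsub : σ₀.Sublist ρ := by
      have h1 : ((ρ.take k).eraseIdx m).Sublist (ρ.take k) := List.eraseIdx_sublist _ m
      have h2 : (ρ.drop (k + 1)).Sublist (ρ.drop k) := by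
        rw [List.drop_eq_getElem_cons hklt]
        exact List.sublist_cons_self _ _
      have h3 : σ₀.Sublist (ρ.take k ++ ρ.drop k) := List.Sublist.append h1 h2
      rwa [List.take_append_drop] at h3
    have hlen : σ₀.length ≤ n := by
      have h1 : ((ρ.take k).eraseIdx m).length = k - 1 := by
        rw [List.length_eraseIdx, hlen_take]
        rw [hlen_take] at hm
        simp [hm]
      have h2 : (ρ.drop (k + 1)).length = ρ.length - (k + 1) := by simp
      have : σ₀.length = k - 1 + (ρ.length - (k + 1)) := by
        rw [hσ₀, List.length_append, h1, h2]
      rw [hlen_take] at hm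
      omega
    obtain ⟨σ, h1, h2, h3⟩ := ihn σ₀ hlen
    exact ⟨σ, h1.trans hsub, h2, h3.trans hπσ₀⟩

theorem exists_reduced_sublist (ρ : List B) :
    ∃ σ, σ.Sublist ρ ∧ cs.IsReduced σ ∧ π σ = π ρ :=
  exists_reduced_sublist_aux cs ρ.length ρ le_rfl

/-- One step of the Bruhat chain relation: `x = t y` for a reflection `t`, with smaller length. -/
def Rel (x y : W) : Prop := ℓ x < ℓ y ∧ ∃ t, cs.IsReflection t ∧ x = t * y

/-- Chains of `Rel`-steps. -/
def Chain (x y : W) : Prop := Relation.ReflTransGen (Rel cs) x y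

theorem rel_mul_simple_right {y : W} {j : B} (h : ℓ (y * s j) < ℓ y) :
    Rel cs (y * s j) y := by
  refine ⟨h, y * s j * y⁻¹, ⟨y, j, rfl⟩, ?_⟩
  simp [mul_assoc]

theorem rel_of_mul_simple_lt {y : W} {j : B} (h : ℓ y < ℓ (y * s j)) :
    Rel cs y (y * s j) := by
  refine ⟨h, y * s j * y⁻¹, ⟨y, j, rfl⟩, ?_⟩
  simp [mul_assoc, cs.simple_mul_simple_cancel_right]

theorem length_mul_simple_of_lt {y : W} {j : B} (h : ℓ y < ℓ (y * s j)) :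
    ℓ (y * s j) = ℓ y + 1 := by
  rcases cs.length_mul_simple y j with h' | h' <;> omega

theorem chain_step' {b y : W} {j : B} (hby : Rel cs b y) (hbj : ℓ b < ℓ (b * s j))
    (hyj : ℓ (y * s j) < ℓ y) : Chain cs (b * s j) y := by
  obtain ⟨hlt, t, htr, hbt⟩ := hby
  obtain ⟨ρ, hρred, hρ⟩ := cs.exists_reduced_word' (y * s j)
  have hρy : π (ρ ++ [j]) = y := by
    rw [cs.wordProd_append, cs.wordProd_singleton, ← hρ, cs.simple_mul_simple_cancel_right]
  have hylen : ℓ y = ℓ (y * s j) + 1 := by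
    rcases cs.length_mul_simple y j with h' | h' <;> omega
  have hred2 : cs.IsReduced (ρ ++ [j]) := by
    rw [CoxeterSystem.IsReduced, hρy, List.length_append, List.length_singleton, ← hρred, ← hρ, ← hylen]
  have hlt2 : ℓ (t * y) < ℓ y := by rw [← hbt]; exact hlt
  obtain ⟨k, hk, hke⟩ := strong_exchange_left cs htr hlt2 hred2 hρy
  rw [List.length_append, List.length_singleton] at hk
  by_cases hcase : k = ρ.length
  · have herase : (ρ ++ [j]).eraseIdx k = ρ := by
      rw [hcase, List.eraseIdx_eq_take_drop_succ, List.take_left]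
      have : (ρ ++ [j]).drop (ρ.length + 1) = [] := by
        apply List.drop_eq_nil_of_le
        simp
      rw [this, List.append_nil]
    rw [herase, ← hρ] at hke
    have : b * s j = y := by
      rw [hbt, hke, cs.simple_mul_simple_cancel_right]
    rw [this]
    exact Relation.ReflTransGen.refl
  · have hklt : k < ρ.length := by omega
    have herase : (ρ ++ [j]).eraseIdx k = ρ.eraseIdx k ++ [j] :=
      List.eraseIdx_append_of_lt_length hklt _
    have hbj2 : b * s j = π (ρ.eraseIdx k) := by
      rw [hbt, hke, herase, cs.wordProd_append, cs.wordProd_singleton,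
        cs.simple_mul_simple_cancel_right]
    have hblen : ℓ (b * s j) < ℓ (y * s j) := by
      rw [hbj2]
      calc ℓ (π (ρ.eraseIdx k)) ≤ (ρ.eraseIdx k).length := cs.length_wordProd_le _
        _ < ρ.length := by rw [List.length_eraseIdx]; simp [hklt]; omega
        _ = ℓ (y * s j) := by rw [← hρred, hρ]
    have hrel1 : Rel cs (b * s j) (y * s j) := by
      refine ⟨hblen, (lis ρ).getD k 1, ?_, ?_⟩
      · apply cs.isReflection_of_mem_leftInvSeq ρ
        have hk2 : k < (lis ρ).length := by rw [cs.length_leftInvSeq]; exact hklt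
        rw [List.getD_eq_getElem _ _ hk2]
        exact List.getElem_mem _
      · rw [hbj2, hρ, cs.getD_leftInvSeq_mul_wordProd]
    exact Relation.ReflTransGen.tail
      (Relation.ReflTransGen.single hrel1) (rel_mul_simple_right cs hyj)


theorem chain_lift (n : ℕ) : ∀ x y : W, ∀ j : B, ℓ y ≤ n → Chain cs x y →
    (ℓ x < ℓ (x * s j) → ℓ y < ℓ (y * s j) → Chain cs (x * s j) (y * s j)) ∧
    (ℓ x < ℓ (x * s j) → ℓ (y * s j) < ℓ y → Chain cs (x * s j) y) := by
  induction n using Nat.strong_induction_on with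
  | _ n ih =>
  intro x y j hy hchain
  rcases Relation.ReflTransGen.cases_tail hchain with heq | ⟨b, hxb, hby⟩
  · subst heq
    constructor
    · intro _ _
      exact Relation.ReflTransGen.refl
    · intro h1 h2
      omega
  · have hlt : ℓ b < ℓ y := hby.1
    have hbn : ℓ b < n := lt_of_lt_of_le hlt hy
    constructor
    · intro hx hy2
      by_cases hbj : ℓ b < ℓ (b * s j)
      · have hc := ((ih (ℓ b) hbn) x b j le_rfl hxb).1 hx hbj
        refine Relation.ReflTransGen.tail hc ?_
        obtain ⟨_, t, htr, hbt⟩ := hby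
        refine ⟨?_, t, htr, by rw [hbt, mul_assoc]⟩
        rw [length_mul_simple_of_lt cs hbj, length_mul_simple_of_lt cs hy2]
        omega
      · have hbj' : ℓ (b * s j) < ℓ b := by
          rcases cs.length_mul_simple b j with h' | h' <;> omega
        have hc := ((ih (ℓ b) hbn) x b j le_rfl hxb).2 hx hbj'
        exact Relation.ReflTransGen.tail (Relation.ReflTransGen.tail hc hby)
          (rel_of_mul_simple_lt cs hy2)
    · intro hx hy2
      by_cases hbj : ℓ (b * s j) < ℓ b
      · have hc := ((ih (ℓ b) hbn) x b j le_rfl hxb).2 hx hbj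
        exact Relation.ReflTransGen.tail hc hby
      · have hbj' : ℓ b < ℓ (b * s j) := by
          rcases cs.length_mul_simple b j with h' | h' <;> omega
        have hc := ((ih (ℓ b) hbn) x b j le_rfl hxb).1 hx hbj'
        exact Relation.ReflTransGen.trans hc (chain_step' cs hby hbj' hy2)

theorem chain_of_sublist : ∀ ω τ : List B, cs.IsReduced ω → cs.IsReduced τ →
    τ.Sublist ω → Chain cs (π τ) (π ω) := by
  intro ω
  induction ω using List.reverseRecOn with
  | nil =>
    intro τ _ _ hs
    rw [List.sublist_nil.mp hs]
    exact Relation.ReflTransGen.refl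
  | append_singleton ω₁ j ihω =>
    intro τ hωred hτred hs
    have hω₁red : cs.IsReduced ω₁ := by
      have := CoxeterSystem.IsReduced.take hωred ω₁.length
      rwa [List.take_left] at this
    rcases List.sublist_append_iff.mp hs with ⟨a, b, rfl, ha, hb⟩
    rcases List.sublist_singleton.mp hb with rfl | rfl
    · rw [List.append_nil] at hτred ⊢
      have hchain := ihω a hω₁red hτred ha
      refine Relation.ReflTransGen.tail hchain ?_
      refine ⟨?_, π ω₁ * s j * (π ω₁)⁻¹, ⟨π ω₁, j, rfl⟩, ?_⟩
      · rw [hω₁red, hωred]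
        simp
      · rw [cs.wordProd_append, cs.wordProd_singleton]
        simp [mul_assoc]
    · have hared : cs.IsReduced a := by
        have := CoxeterSystem.IsReduced.take hτred a.length
        rwa [List.take_left] at this
      have hchain := ihω a hω₁red hared ha
      have h1 : ℓ (π a) < ℓ (π a * s j) := by
        have e : π a * s j = π (a ++ [j]) := by
          rw [cs.wordProd_append, cs.wordProd_singleton]
        rw [e, hared, hτred]
        simp
      have h2 : ℓ (π ω₁) < ℓ (π ω₁ * s j) := by
        have e : π ω₁ * s j = π (ω₁ ++ [j]) := by
          rw [cs.wordProd_append, cs.wordProd_singleton]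
        rw [e, hω₁red, hωred]
        simp
      have hc := (chain_lift cs (ℓ (π ω₁)) (π a) (π ω₁) j le_rfl hchain).1 h1 h2
      have e1 : π a * s j = π (a ++ [j]) := by rw [cs.wordProd_append, cs.wordProd_singleton]
      have e2 : π ω₁ * s j = π (ω₁ ++ [j]) := by rw [cs.wordProd_append, cs.wordProd_singleton]
      rwa [e1, e2] at hc

theorem exists_sublist_of_chain {v u : W} (h : Chain cs v u) :
    ∀ ω : List B, cs.IsReduced ω → π ω = u →
      ∃ τ, τ.Sublist ω ∧ cs.IsReduced τ ∧ π τ = v := by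
  induction h with
  | refl =>
    intro ω hred hπ
    exact ⟨ω, List.Sublist.refl _, hred, hπ⟩
  | tail hvb hby ihc =>
    intro ω hred hπ
    obtain ⟨hlt, t, htr, hbt⟩ := hby
    rename_i b c
    have hlt2 : ℓ (t * c) < ℓ c := by rw [← hbt]; exact hlt
    obtain ⟨k, hk, hke⟩ := strong_exchange_left cs htr hlt2 hred hπ
    obtain ⟨σ, hσs, hσred, hσπ⟩ := exists_reduced_sublist cs (ω.eraseIdx k)
    have hσb : π σ = b := by rw [hσπ, ← hke, ← hbt]
    obtain ⟨τ, hτs, hτred, hτπ⟩ := ihc σ hσred hσb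
    exact ⟨τ, hτs.trans (hσs.trans (List.eraseIdx_sublist ω k)), hτred, hτπ⟩

end BruhatAux


/-- Bruhat order on a Coxeter group: `u ≤ w` iff some reduced word of `w` admits a
subword whose product is `u`. -/
def BruhatLE (cs : CoxeterSystem M W) (u w : W) : Prop :=
  ∃ ω : List B, cs.IsReduced ω ∧ w = cs.wordProd ω ∧
    ∃ ω' : List B, ω'.Sublist ω ∧ u = cs.wordProd ω'

namespace BruhatAux

variable [DecidableEq W] (cs : CoxeterSystem M W)

local prefix:100 "s" => cs.simple
local prefix:100 "π" => cs.wordProd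
local prefix:100 "ℓ" => cs.length

theorem subword_property {v u : W} (h : BruhatLE cs v u) {ω : List B}
    (hred : cs.IsReduced ω) (hπ : π ω = u) :
    ∃ τ, τ.Sublist ω ∧ cs.IsReduced τ ∧ π τ = v := by
  obtain ⟨κ, hκred, rfl, τ', hsub, rfl⟩ := h
  obtain ⟨σ, hσs, hσred, hσπ⟩ := exists_reduced_sublist cs τ'
  have hchain := chain_of_sublist cs κ σ hκred hσred (hσs.trans hsub)
  rw [hσπ] at hchain
  exact exists_sublist_of_chain cs hchain ω hred hπ

theorem bruhatLE_refl (v : W) : BruhatLE cs v v := by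
  obtain ⟨ω, hred, hπ⟩ := cs.exists_reduced_word' v
  exact ⟨ω, hred, hπ, ω, List.Sublist.refl _, hπ⟩

theorem bruhatLE_trans {a b c : W} (hab : BruhatLE cs a b) (hbc : BruhatLE cs b c) :
    BruhatLE cs a c := by
  obtain ⟨ω, hred, hπ, τ, hsub, hτπ⟩ := hbc
  obtain ⟨σ, hσs, hσred, hσπ⟩ := exists_reduced_sublist cs τ
  have hσb : π σ = b := by rw [hσπ, ← hτπ]
  obtain ⟨τa, hτas, _, hτaπ⟩ := subword_property cs hab hσred hσb
  exact ⟨ω, hred, hπ, τa, hτas.trans (hσs.trans hsub), hτaπ.symm⟩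

theorem bruhatLE_length_le {v u : W} (h : BruhatLE cs v u) : ℓ v ≤ ℓ u := by
  obtain ⟨ω, hred, rfl, τ, hsub, rfl⟩ := h
  calc ℓ (π τ) ≤ τ.length := cs.length_wordProd_le τ
    _ ≤ ω.length := hsub.length_le
    _ = ℓ (π ω) := hred.symm

theorem bruhatLE_eq_of_length_le {v u : W} (h : BruhatLE cs v u) (hl : ℓ u ≤ ℓ v) :
    v = u := by
  obtain ⟨ω, hred, rfl, τ, hsub, rfl⟩ := h
  have h1 : ℓ (π τ) ≤ τ.length := cs.length_wordProd_le τ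
  have h2 : τ.length ≤ ω.length := hsub.length_le
  have h3 : ω.length = ℓ (π ω) := hred.symm
  rw [hsub.eq_of_length (by omega)]

theorem le_simple_mul {v u₁ : W} {i : B} (hlt : ℓ u₁ < ℓ (s i * u₁))
    (h : BruhatLE cs v u₁) :
    BruhatLE cs v (s i * u₁) ∧ BruhatLE cs (s i * v) (s i * u₁) := by
  obtain ⟨ρ, hρred, rfl, τ, hsub, rfl⟩ := h
  have hlen : ℓ (s i * π ρ) = ℓ (π ρ) + 1 := by
    rcases cs.length_simple_mul (π ρ) i with h' | h' <;> omega
  have hred2 : cs.IsReduced (i :: ρ) := by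
    rw [CoxeterSystem.IsReduced, cs.wordProd_cons, hlen, hρred]
    simp
  constructor
  · exact ⟨i :: ρ, hred2, (cs.wordProd_cons i ρ).symm, τ, hsub.cons i, rfl⟩
  · exact ⟨i :: ρ, hred2, (cs.wordProd_cons i ρ).symm, i :: τ, hsub.cons₂ i,
      (cs.wordProd_cons i τ).symm⟩

theorem bruhat_Z {u v : W} {i : B} (hi : ℓ (s i * u) < ℓ u) (h : BruhatLE cs v u) :
    BruhatLE cs v (s i * u) ∨ ∃ v', v = s i * v' ∧ BruhatLE cs v' (s i * u) := by
  obtain ⟨ρ, hρred, hρ⟩ := cs.exists_reduced_word' (s i * u)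
  have hπu : π (i :: ρ) = u := by
    rw [cs.wordProd_cons, ← hρ, cs.simple_mul_simple_cancel_left]
  have hulen : ℓ (s i * u) + 1 = ℓ u := by
    rcases cs.length_simple_mul u i with h' | h' <;> omega
  have hured : cs.IsReduced (i :: ρ) := by
    rw [CoxeterSystem.IsReduced, hπu, List.length_cons, ← hρred, ← hρ, hulen]
  obtain ⟨τ, hτs, hτred, hτπ⟩ := subword_property cs h hured hπu
  rcases List.sublist_cons_iff.mp hτs with hcase | ⟨r, rfl, hrs⟩
  · exact Or.inl ⟨ρ, hρred, hρ, τ, hcase, hτπ.symm⟩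
  · refine Or.inr ⟨π r, ?_, ⟨ρ, hρred, hρ, r, hrs, rfl⟩⟩
    rw [← hτπ, cs.wordProd_cons]

theorem bruhat_G {x y : W} {i : B} (hi : ℓ (s i * y) < ℓ y) (h : BruhatLE cs x y) :
    BruhatLE cs (s i * x) y := by
  obtain ⟨ρ, hρred, hρ⟩ := cs.exists_reduced_word' (s i * y)
  have hπy : π (i :: ρ) = y := by
    rw [cs.wordProd_cons, ← hρ, cs.simple_mul_simple_cancel_left]
  have hylen : ℓ (s i * y) + 1 = ℓ y := by
    rcases cs.length_simple_mul y i with h' | h' <;> omega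
  have hured : cs.IsReduced (i :: ρ) := by
    rw [CoxeterSystem.IsReduced, hπy, List.length_cons, ← hρred, ← hρ, hylen]
  obtain ⟨τ, hτs, hτred, hτπ⟩ := subword_property cs h hured hπy
  rcases List.sublist_cons_iff.mp hτs with hcase | ⟨r, rfl, hrs⟩
  · exact ⟨i :: ρ, hured, hπy.symm, i :: τ, hcase.cons₂ i, by rw [cs.wordProd_cons, hτπ]⟩
  · refine ⟨i :: ρ, hured, hπy.symm, r, hrs.cons i, ?_⟩
    rw [← hτπ, cs.wordProd_cons, cs.simple_mul_simple_cancel_left]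

theorem main_aux (w : W) : ∀ n : ℕ, ∀ u : W, ℓ u ≤ n →
    ∃ y v₀ : W, BruhatLE cs v₀ u ∧ y = v₀ * w ∧
      (∀ z, (∃ v, BruhatLE cs v u ∧ z = v * w) → BruhatLE cs z y) ∧
      ℓ y = ℓ w + ℓ (y * w⁻¹) := by
  intro n
  induction n with
  | zero =>
    intro u hu
    have hu1 : u = 1 := cs.length_eq_zero_iff.mp (Nat.le_zero.mp hu)
    subst hu1
    refine ⟨w, 1, bruhatLE_refl cs 1, (one_mul w).symm, ?_, ?_⟩
    · rintro z ⟨v, hv, rfl⟩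
      have hv1 : v = 1 := by
        have := bruhatLE_length_le cs hv
        rw [cs.length_one] at this
        exact cs.length_eq_zero_iff.mp (Nat.le_zero.mp this)
      rw [hv1, one_mul]
      exact bruhatLE_refl cs w
    · simp [cs.length_one]
  | succ n ihn =>
    intro u hu
    by_cases hu0 : ℓ u ≤ n
    · exact ihn u hu0
    have hne : u ≠ 1 := by
      intro h
      rw [h, cs.length_one] at hu0
      omega
    obtain ⟨i, hi⟩ := cs.exists_leftDescent_of_ne_one hne
    have hi : ℓ (s i * u) < ℓ u := hi
    have huu : u = s i * (s i * u) := by rw [cs.simple_mul_simple_cancel_left]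
    have hu₁len : ℓ (s i * u) + 1 = ℓ u := by
      rcases cs.length_simple_mul u i with h' | h' <;> omega
    obtain ⟨y₁, v₁, hv₁, hy₁, hmax₁, hlen₁⟩ := ihn (s i * u) (by omega)
    have hascent : ℓ (s i * u) < ℓ (s i * (s i * u)) := by rw [← huu]; omega
    by_cases hyi : ℓ y₁ < ℓ (s i * y₁)
    · refine ⟨s i * y₁, s i * v₁, ?_, by rw [hy₁, mul_assoc], ?_, ?_⟩
      · have := (le_simple_mul cs hascent hv₁).2
        rwa [← huu] at this
      · rintro z ⟨v, hv, rfl⟩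
        rcases bruhat_Z cs hi hv with hc | ⟨v', rfl, hc⟩
        · have h1 : BruhatLE cs (v * w) y₁ := hmax₁ _ ⟨v, hc, rfl⟩
          have h2 : BruhatLE cs y₁ (s i * y₁) :=
            (le_simple_mul cs hyi (bruhatLE_refl cs y₁)).1
          exact bruhatLE_trans cs h1 h2
        · have h1 : BruhatLE cs (v' * w) y₁ := hmax₁ _ ⟨v', hc, rfl⟩
          have h2 := (le_simple_mul cs hyi h1).2
          rwa [← mul_assoc] at h2
      · have e2 : y₁ * w⁻¹ = v₁ := by rw [hy₁]; simp
        rw [e2] at hlen₁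
        have e1 : s i * y₁ * w⁻¹ = s i * v₁ := by
          rw [hy₁]
          simp [mul_assoc]
        have h2 : ℓ (s i * y₁) = ℓ y₁ + 1 := by
          rcases cs.length_simple_mul y₁ i with h' | h' <;> omega
        have h3 : ℓ (s i * v₁) ≤ ℓ v₁ + 1 := by
          have := cs.length_mul_le (s i) v₁
          rw [cs.length_simple] at this
          omega
        have h4 : ℓ (s i * y₁) ≤ ℓ (s i * v₁) + ℓ w := by
          have : s i * y₁ = (s i * v₁) * w := by rw [hy₁, mul_assoc]
          rw [this]
          exact cs.length_mul_le _ _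
        rw [e1, h2, hlen₁]
        omega
    · have hyi' : ℓ (s i * y₁) < ℓ y₁ := by
        rcases cs.length_simple_mul y₁ i with h' | h' <;> omega
      refine ⟨y₁, v₁, ?_, hy₁, ?_, hlen₁⟩
      · have := (le_simple_mul cs hascent hv₁).1
        rwa [← huu] at this
      · rintro z ⟨v, hv, rfl⟩
        rcases bruhat_Z cs hi hv with hc | ⟨v', rfl, hc⟩
        · exact hmax₁ _ ⟨v, hc, rfl⟩
        · have h1 : BruhatLE cs (v' * w) y₁ := hmax₁ _ ⟨v', hc, rfl⟩
          have h2 := bruhat_G cs hyi' h1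
          rw [mul_assoc]
          exact h2

end BruhatAux

/-- Lemma 1.4(2): the set `{v w ; v ≤ u}` contains a unique maximal element `y` for the
Bruhat order, and `ℓ(y) = ℓ(w) + ℓ(y w⁻¹)`. -/
theorem exists_unique_max_of_bruhat_interval_mul
    (cs : CoxeterSystem M W) (u w : W) :
    ∃ y : W, (∃ v : W, BruhatLE cs v u ∧ y = v * w) ∧
      (∀ z : W, (∃ v : W, BruhatLE cs v u ∧ z = v * w) → BruhatLE cs z y) ∧
      (∀ y' : W, (∃ v : W, BruhatLE cs v u ∧ y' = v * w) →
        (∀ z : W, (∃ v : W, BruhatLE cs v u ∧ z = v * w) → BruhatLE cs z y') → y' = y) ∧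
      cs.length y = cs.length w + cs.length (y * w⁻¹) := by
  classical
  obtain ⟨y, v₀, hv₀, hy, hmax, hlen⟩ :=
    BruhatAux.main_aux cs w (cs.length u) u le_rfl
  refine ⟨y, ⟨v₀, hv₀, hy⟩, hmax, ?_, hlen⟩
  intro y' hy'mem hy'max
  have h1 : BruhatLE cs y' y := hmax y' hy'mem
  have h2 : BruhatLE cs y y' := hy'max y ⟨v₀, hv₀, hy⟩
  exact BruhatAux.bruhatLE_eq_of_length_le cs h1 (BruhatAux.bruhatLE_length_le cs h2)
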